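/- Let u : ℝ × ℝ → ℝ be sufficiently smooth, positive, and satisfy u_t = ∂x(u^{−4/3} u_x) + u^{−1/3} at every point. Define, for all (t,y) with |y| < √3, v(t,y) := (1 − y²/3)^{−3/2} · u(t, √3 · artanh(y/√3)). Then v is positive and satisfies v_t = ∂y(v^{−4/3} v_y) at every point (t,y) with |y| < √3. (This is the change of variables ū = u·cosh³(x/√3), x̄ = √3·tanh(x/√3), which removes the source ±u^{−1/3} with the plus sign.) -/

import Mathlib

noncomputable section

/-- Partial derivative with respect to the first variable (time). -/
def pdT (f : ℝ × ℝ → ℝ) (t x : ℝ) : ℝ := deriv (fun s => f (s, x)) t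

/-- Partial derivative with respect to the second variable (space). -/
def pdX (f : ℝ × ℝ → ℝ) (t x : ℝ) : ℝ := deriv (fun y => f (t, y)) x

/-- Inverse hyperbolic tangent. -/
def artanhR (x : ℝ) : ℝ := Real.log ((1 + x) / (1 - x)) / 2

lemma artanhR_hasDerivAt {x : ℝ} (hx : |x| < 1) :
    HasDerivAt artanhR (1 / (1 - x ^ 2)) x := by
  obtain ⟨hx1, hx2⟩ := abs_lt.mp hx
  have h1 : (0:ℝ) < 1 + x := by linarith
  have h2 : (0:ℝ) < 1 - x := by linarith
  have hd1 : HasDerivAt (fun z : ℝ => Real.log (1 + z)) (1 / (1 + x)) x := by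
    simpa using ((hasDerivAt_id x).const_add 1).log h1.ne'
  have hd2 : HasDerivAt (fun z : ℝ => Real.log (1 - z)) (-1 / (1 - x)) x := by
    simpa using ((hasDerivAt_id x).const_sub 1).log h2.ne'
  have hd : HasDerivAt (fun z : ℝ => (Real.log (1 + z) - Real.log (1 - z)) / 2)
      ((1 / (1 + x) - -1 / (1 - x)) / 2) x := (hd1.sub hd2).div_const 2
  have hev : artanhR =ᶠ[nhds x] fun z : ℝ => (Real.log (1 + z) - Real.log (1 - z)) / 2 := by
    filter_upwards [Ioo_mem_nhds hx1 hx2] with z hz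
    have hz1 : (0:ℝ) < 1 + z := by linarith [hz.1]
    have hz2 : (0:ℝ) < 1 - z := by linarith [hz.2]
    unfold artanhR
    rw [Real.log_div hz1.ne' hz2.ne']
  have hres := hd.congr_of_eventuallyEq hev
  refine hres.congr_deriv ?_
  have he : 1 - x^2 = (1+x)*(1-x) := by ring
  rw [he]; field_simp; ring

/-- the change of variables `ū = u·cosh³(x/√3)`,
`x̄ = √3·tanh(x/√3)` removes the source `u^{−1/3}` from the equation
`u_t = ∂x(u^{−4/3} u_x) + u^{−1/3}`, on the strip `|y| < √3`. -/
theorem remove_source_special_power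
    (u : ℝ × ℝ → ℝ) (hupos : ∀ p, 0 < u p) (hu : ContDiff ℝ 2 u)
    (heq : ∀ t x : ℝ,
      pdT u t x = deriv (fun y => u (t, y) ^ (-(4 / 3) : ℝ) * pdX u t y) x +
        u (t, x) ^ (-(1 / 3) : ℝ)) :
    ∀ t y : ℝ, |y| < Real.sqrt 3 →
      0 < (fun p : ℝ × ℝ => (1 - p.2 ^ 2 / 3) ^ (-(3 / 2) : ℝ) *
        u (p.1, Real.sqrt 3 * artanhR (p.2 / Real.sqrt 3))) (t, y) ∧
      pdT (fun p => (1 - p.2 ^ 2 / 3) ^ (-(3 / 2) : ℝ) *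
          u (p.1, Real.sqrt 3 * artanhR (p.2 / Real.sqrt 3))) t y =
        deriv (fun z =>
          ((fun p : ℝ × ℝ => (1 - p.2 ^ 2 / 3) ^ (-(3 / 2) : ℝ) *
              u (p.1, Real.sqrt 3 * artanhR (p.2 / Real.sqrt 3))) (t, z)) ^ (-(4 / 3) : ℝ) *
            pdX (fun p => (1 - p.2 ^ 2 / 3) ^ (-(3 / 2) : ℝ) *
              u (p.1, Real.sqrt 3 * artanhR (p.2 / Real.sqrt 3))) t z) y := by
  intro t y hy
  have hs3sq : Real.sqrt 3 ^ 2 = 3 := Real.sq_sqrt (by norm_num)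
  have hs3pos : (0:ℝ) < Real.sqrt 3 := Real.sqrt_pos.mpr (by norm_num)
  have hwz : ∀ z : ℝ, |z| < Real.sqrt 3 → (0:ℝ) < 1 - z ^ 2 / 3 := by
    intro z hz
    have h : |z| ^ 2 < Real.sqrt 3 ^ 2 := pow_lt_pow_left₀ hz (abs_nonneg z) two_ne_zero
    rw [sq_abs, hs3sq] at h
    linarith
  have hwy : (0:ℝ) < 1 - y ^ 2 / 3 := hwz y hy
  constructor
  · exact mul_pos (Real.rpow_pos_of_pos hwy _) (hupos _)
  simp only [pdT, pdX]
  -- derivative of the change of variables map a(z) = √3 * artanh(z/√3)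
  have ha : ∀ z : ℝ, |z| < Real.sqrt 3 →
      HasDerivAt (fun w : ℝ => Real.sqrt 3 * artanhR (w / Real.sqrt 3)) (1 - z ^ 2 / 3)⁻¹ z := by
    intro z hz
    have hw := hwz z hz
    have hx : |z / Real.sqrt 3| < 1 := by
      rw [abs_div, abs_of_pos hs3pos]
      exact (div_lt_one hs3pos).mpr hz
    have h1 := (artanhR_hasDerivAt hx).comp z ((hasDerivAt_id z).div_const (Real.sqrt 3))
    have h2 := h1.const_mul (Real.sqrt 3)
    have h3 : Real.sqrt 3 * (1 / (1 - (z / Real.sqrt 3) ^ 2) * (1 / Real.sqrt 3))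
        = (1 - z ^ 2 / 3)⁻¹ := by
      have h30 : (3:ℝ) - z ^ 2 ≠ 0 := by nlinarith
      rw [div_pow, hs3sq]
      field_simp
    rw [h3] at h2
    exact h2
  -- facts about x ↦ u (t, x)
  have hUc2 : ContDiff ℝ 2 (fun x : ℝ => u (t, x)) :=
    hu.comp (contDiff_const.prodMk contDiff_id)
  have hUdiff : Differentiable ℝ (fun x : ℝ => u (t, x)) := hUc2.differentiable two_ne_zero
  have hdUdiff : Differentiable ℝ (deriv (fun x : ℝ => u (t, x))) := by
    have h2 : ContDiff ℝ ((1 : ℕ) + 1) (fun x : ℝ => u (t, x)) := by exact_mod_cast hUc2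
    exact (contDiff_succ_iff_deriv.mp h2).2.2.differentiable one_ne_zero
  -- derivative of V z = (1 - z²/3)^(-3/2) * u(t, a z)
  have hVd : ∀ z : ℝ, |z| < Real.sqrt 3 →
      HasDerivAt (fun w : ℝ => (1 - w ^ 2 / 3) ^ (-(3 / 2) : ℝ) *
          u (t, Real.sqrt 3 * artanhR (w / Real.sqrt 3)))
        ((1 - z ^ 2 / 3) ^ (-(5 / 2) : ℝ) *
          (z * u (t, Real.sqrt 3 * artanhR (z / Real.sqrt 3)) +
            deriv (fun x : ℝ => u (t, x)) (Real.sqrt 3 * artanhR (z / Real.sqrt 3)))) z := by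
    intro z hz
    have hw := hwz z hz
    have hwd : HasDerivAt (fun w : ℝ => 1 - w ^ 2 / 3) (-(2 * z / 3)) z := by
      have := ((hasDerivAt_pow 2 z).div_const 3).const_sub 1
      simpa using this
    have hcd : HasDerivAt (fun w : ℝ => (1 - w ^ 2 / 3) ^ (-(3 / 2) : ℝ))
        (z * (1 - z ^ 2 / 3) ^ (-(5 / 2) : ℝ)) z := by
      have h := hwd.rpow_const (p := (-(3 / 2) : ℝ)) (Or.inl hw.ne')
      have he : (-(3 / 2) : ℝ) - 1 = -(5 / 2) := by norm_num
      rw [he] at h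
      convert h using 1
      ring
    have hUa : HasDerivAt (fun w : ℝ => u (t, Real.sqrt 3 * artanhR (w / Real.sqrt 3)))
        (deriv (fun x : ℝ => u (t, x)) (Real.sqrt 3 * artanhR (z / Real.sqrt 3)) *
          (1 - z ^ 2 / 3)⁻¹) z := by
      have := ((hUdiff _).hasDerivAt).comp z (ha z hz)
      simpa [Function.comp_def] using this
    have h := hcd.mul hUa
    refine h.congr_deriv (Eq.symm ?_)
    have hkey : (1 - z ^ 2 / 3 : ℝ) ^ (-(3 / 2) : ℝ) * (1 - z ^ 2 / 3)⁻¹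
        = (1 - z ^ 2 / 3) ^ (-(5 / 2) : ℝ) := by
      rw [← Real.rpow_neg_one, ← Real.rpow_add hw]
      norm_num
    linear_combination
      deriv (fun x : ℝ => u (t, x)) (Real.sqrt 3 * artanhR (z / Real.sqrt 3)) * hkey.symm
  -- pointwise identity for the flux on the strip
  have hfun : ∀ z : ℝ, |z| < Real.sqrt 3 →
      ((1 - z ^ 2 / 3) ^ (-(3 / 2) : ℝ) * u (t, Real.sqrt 3 * artanhR (z / Real.sqrt 3)))
          ^ (-(4 / 3) : ℝ) *
        deriv (fun w : ℝ => (1 - w ^ 2 / 3) ^ (-(3 / 2) : ℝ) *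
          u (t, Real.sqrt 3 * artanhR (w / Real.sqrt 3))) z
      = (1 - z ^ 2 / 3) ^ (-(1 / 2) : ℝ) *
          (z * u (t, Real.sqrt 3 * artanhR (z / Real.sqrt 3)) ^ (-(1 / 3) : ℝ) +
            u (t, Real.sqrt 3 * artanhR (z / Real.sqrt 3)) ^ (-(4 / 3) : ℝ) *
              deriv (fun x : ℝ => u (t, x)) (Real.sqrt 3 * artanhR (z / Real.sqrt 3))) := by
    intro z hz
    have hw := hwz z hz
    have hup := hupos (t, Real.sqrt 3 * artanhR (z / Real.sqrt 3))
    rw [(hVd z hz).deriv]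
    rw [Real.mul_rpow (Real.rpow_nonneg hw.le _) hup.le]
    have h1 : ((1 - z ^ 2 / 3 : ℝ) ^ (-(3 / 2) : ℝ)) ^ (-(4 / 3) : ℝ)
        = (1 - z ^ 2 / 3) ^ (2 : ℝ) := by
      rw [← Real.rpow_mul hw.le]
      norm_num
    have h2 : (1 - z ^ 2 / 3 : ℝ) ^ (2 : ℝ) * (1 - z ^ 2 / 3) ^ (-(5 / 2) : ℝ)
        = (1 - z ^ 2 / 3) ^ (-(1 / 2) : ℝ) := by
      rw [← Real.rpow_add hw]
      norm_num
    have h3 : u (t, Real.sqrt 3 * artanhR (z / Real.sqrt 3)) ^ (-(4 / 3) : ℝ) *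
          u (t, Real.sqrt 3 * artanhR (z / Real.sqrt 3))
        = u (t, Real.sqrt 3 * artanhR (z / Real.sqrt 3)) ^ (-(1 / 3) : ℝ) := by
      rw [show (-(1 / 3) : ℝ) = -(4 / 3) + 1 by norm_num, Real.rpow_add_one hup.ne']
    rw [h1]
    linear_combination
      (z * u (t, Real.sqrt 3 * artanhR (z / Real.sqrt 3)) ^ (-(4 / 3) : ℝ) *
          u (t, Real.sqrt 3 * artanhR (z / Real.sqrt 3)) +
        u (t, Real.sqrt 3 * artanhR (z / Real.sqrt 3)) ^ (-(4 / 3) : ℝ) *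
          deriv (fun x : ℝ => u (t, x)) (Real.sqrt 3 * artanhR (z / Real.sqrt 3))) * h2 +
      z * (1 - z ^ 2 / 3 : ℝ) ^ (-(1 / 2) : ℝ) * h3
  -- the strip is open
  have hmem : {z : ℝ | |z| < Real.sqrt 3} ∈ nhds y :=
    (isOpen_lt continuous_abs continuous_const).mem_nhds hy
  -- replace the flux by its explicit form
  have hRE : deriv (fun z : ℝ =>
        ((1 - z ^ 2 / 3) ^ (-(3 / 2) : ℝ) * u (t, Real.sqrt 3 * artanhR (z / Real.sqrt 3)))
            ^ (-(4 / 3) : ℝ) *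
          deriv (fun w : ℝ => (1 - w ^ 2 / 3) ^ (-(3 / 2) : ℝ) *
            u (t, Real.sqrt 3 * artanhR (w / Real.sqrt 3))) z) y
      = deriv (fun z : ℝ => (1 - z ^ 2 / 3) ^ (-(1 / 2) : ℝ) *
          (z * u (t, Real.sqrt 3 * artanhR (z / Real.sqrt 3)) ^ (-(1 / 3) : ℝ) +
            u (t, Real.sqrt 3 * artanhR (z / Real.sqrt 3)) ^ (-(4 / 3) : ℝ) *
              deriv (fun x : ℝ => u (t, x)) (Real.sqrt 3 * artanhR (z / Real.sqrt 3)))) y := by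
    apply Filter.EventuallyEq.deriv_eq
    filter_upwards [hmem] with z hz
    exact hfun z hz
  set x0 : ℝ := Real.sqrt 3 * artanhR (y / Real.sqrt 3) with hx0
  have hup0 := hupos (t, x0)
  -- derivative of (1-z²/3)^(-1/2)
  have hwd : HasDerivAt (fun w : ℝ => 1 - w ^ 2 / 3) (-(2 * y / 3)) y := by
    have := ((hasDerivAt_pow 2 y).div_const 3).const_sub 1
    simpa using this
  have hcd12 : HasDerivAt (fun w : ℝ => (1 - w ^ 2 / 3) ^ (-(1 / 2) : ℝ))
      (y / 3 * (1 - y ^ 2 / 3) ^ (-(3 / 2) : ℝ)) y := by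
    have h := hwd.rpow_const (p := (-(1 / 2) : ℝ)) (Or.inl hwy.ne')
    have he : (-(1 / 2) : ℝ) - 1 = -(3 / 2) := by norm_num
    rw [he] at h
    convert h using 1
    ring
  -- derivative of u^( -1/3 ) ∘ a
  have hGd : HasDerivAt (fun x : ℝ => u (t, x) ^ (-(1 / 3) : ℝ))
      (-(1 / 3) * u (t, x0) ^ (-(4 / 3) : ℝ) * deriv (fun x : ℝ => u (t, x)) x0) x0 := by
    have h := ((hUdiff x0).hasDerivAt).rpow_const (p := (-(1 / 3) : ℝ)) (Or.inl hup0.ne')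
    have he : (-(1 / 3) : ℝ) - 1 = -(4 / 3) := by norm_num
    rw [he] at h
    convert h using 1
    ring
  have hGa : HasDerivAt (fun z : ℝ => u (t, Real.sqrt 3 * artanhR (z / Real.sqrt 3)) ^ (-(1 / 3) : ℝ))
      ((-(1 / 3) * u (t, x0) ^ (-(4 / 3) : ℝ) * deriv (fun x : ℝ => u (t, x)) x0) *
        (1 - y ^ 2 / 3)⁻¹) y := by
    have := hGd.comp y (ha y hy)
    simpa [Function.comp_def] using this
  have hzGa : HasDerivAt (fun z : ℝ =>
      z * u (t, Real.sqrt 3 * artanhR (z / Real.sqrt 3)) ^ (-(1 / 3) : ℝ))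
      (1 * u (t, x0) ^ (-(1 / 3) : ℝ) +
        y * ((-(1 / 3) * u (t, x0) ^ (-(4 / 3) : ℝ) * deriv (fun x : ℝ => u (t, x)) x0) *
          (1 - y ^ 2 / 3)⁻¹)) y := (hasDerivAt_id' y).mul hGa
  -- derivative of F ∘ a, where F is the flux in x-variables
  have hFdiff : DifferentiableAt ℝ
      (fun x : ℝ => u (t, x) ^ (-(4 / 3) : ℝ) * deriv (fun x : ℝ => u (t, x)) x) x0 :=
    ((((hUdiff x0).hasDerivAt).rpow_const (Or.inl hup0.ne')).differentiableAt).mul (hdUdiff x0)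
  have hFa : HasDerivAt (fun z : ℝ =>
      u (t, Real.sqrt 3 * artanhR (z / Real.sqrt 3)) ^ (-(4 / 3) : ℝ) *
        deriv (fun x : ℝ => u (t, x)) (Real.sqrt 3 * artanhR (z / Real.sqrt 3)))
      (deriv (fun x : ℝ => u (t, x) ^ (-(4 / 3) : ℝ) * deriv (fun x : ℝ => u (t, x)) x) x0 *
        (1 - y ^ 2 / 3)⁻¹) y := by
    have := (hFdiff.hasDerivAt).comp y (ha y hy)
    simpa [Function.comp_def] using this
  have hEd := hcd12.mul (hzGa.add hFa)
  simp only [Pi.mul_def, Pi.add_def] at hEd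
  rw [hRE, hEd.deriv]
  -- time derivative side
  have hTd : DifferentiableAt ℝ (fun s : ℝ => u (s, x0)) t :=
    ((hu.differentiable two_ne_zero).comp (differentiable_id.prodMk (differentiable_const x0))) t
  rw [deriv_const_mul _ hTd]
  have heq' := heq t x0
  simp only [pdT, pdX] at heq'
  rw [heq']
  -- final algebraic identity
  have k1 : (1 - y ^ 2 / 3 : ℝ) ^ (-(1 / 2) : ℝ) * (1 - y ^ 2 / 3)⁻¹
      = (1 - y ^ 2 / 3) ^ (-(3 / 2) : ℝ) := by
    rw [← Real.rpow_neg_one, ← Real.rpow_add hwy]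
    norm_num
  have k2 : (1 - y ^ 2 / 3 : ℝ) ^ (-(1 / 2) : ℝ)
      = (1 - y ^ 2 / 3) ^ (-(3 / 2) : ℝ) * (1 - y ^ 2 / 3) := by
    rw [show (-(1 / 2) : ℝ) = -(3 / 2) + 1 by norm_num, Real.rpow_add_one hwy.ne']
  linear_combination
    (y / 3 * (u (t, x0) ^ (-(4 / 3) : ℝ) * deriv (fun x : ℝ => u (t, x)) x0) -
      deriv (fun x : ℝ => u (t, x) ^ (-(4 / 3) : ℝ) * deriv (fun x : ℝ => u (t, x)) x) x0) * k1 -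
    u (t, x0) ^ (-(1 / 3) : ℝ) * k2
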